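/- For u, v ∈ ℕ^d, the binomial x^u − x^v lies in the lattice ideal I_L = ideal{x^{w⁺} − x^{w⁻} : w ∈ L} of a sublattice L ⊆ ℤ^d if and only if u − v ∈ L. -/

import Mathlib

open MvPolynomial

/-- Encode a `ℕ^d` vector as a finitely supported exponent vector. -/
noncomputable def toExp {d : ℕ} (u : Fin d → ℕ) : Fin d →₀ ℕ :=
  Finsupp.equivFunOnFinite.symm u

/-- The lattice ideal of a sublattice `L ⊆ ℤ^d`: generated by the binomials
`x^{w⁺} − x^{w⁻}` for `w ∈ L`. -/
noncomputable def latticeIdeal {d : ℕ} (F : Type*) [Field F] (L : Submodule ℤ (Fin d → ℤ)) :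
    Ideal (MvPolynomial (Fin d) F) :=
  Ideal.span {p | ∃ w ∈ L,
    p = monomial (toExp fun i => (w i).toNat) (1 : F) -
        monomial (toExp fun i => (-w i).toNat) (1 : F)}

lemma toExp_add {d : ℕ} (u v : Fin d → ℕ) : toExp (u + v) = toExp u + toExp v := by
  ext i; rfl

/-- The evaluation map to the group algebra of the quotient `ℤ^d / L`. -/
noncomputable def latPhi {d : ℕ} (F : Type*) [Field F] (L : Submodule ℤ (Fin d → ℤ)) :
    MvPolynomial (Fin d) F →ₐ[F] AddMonoidAlgebra F ((Fin d → ℤ) ⧸ L) :=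
  aeval fun i => AddMonoidAlgebra.single (Submodule.Quotient.mk (Pi.single i 1)) 1

lemma latPhi_monomial {d : ℕ} (F : Type*) [Field F] (L : Submodule ℤ (Fin d → ℤ))
    (u : Fin d → ℕ) :
    latPhi F L (monomial (toExp u) 1) =
      AddMonoidAlgebra.single (Submodule.Quotient.mk (fun i => (u i : ℤ))) 1 := by
  rw [latPhi, aeval_monomial, map_one, one_mul]
  rw [Finsupp.prod_fintype _ _ (fun i => by simp)]
  simp only [AddMonoidAlgebra.single_pow, one_pow]
  rw [AddMonoidAlgebra.prod_single, Finset.prod_const_one]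
  congr 1
  have : ∀ i : Fin d, (toExp u i) • Submodule.Quotient.mk (p := L) (Pi.single i (1 : ℤ)) =
      Submodule.Quotient.mk (Pi.single i ((u i : ℤ))) := by
    intro i
    have h1 : (toExp u i) • Submodule.Quotient.mk (p := L) (Pi.single i (1 : ℤ)) =
        ((u i : ℤ)) • Submodule.Quotient.mk (p := L) (Pi.single i (1 : ℤ)) := by
      rw [natCast_zsmul]; rfl
    rw [h1, ← Submodule.Quotient.mk_smul L (u i : ℤ)]
    congr 1
    funext j
    by_cases h : j = i <;> simp [h, Pi.single_apply]
  simp only [this]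
  rw [show (fun i => Submodule.Quotient.mk (p := L) (Pi.single i ((u i : ℤ)))) =
      (fun i => L.mkQ (Pi.single i ((u i : ℤ)))) from rfl, ← map_sum,
      show Submodule.Quotient.mk (p := L) (fun i => (u i : ℤ)) = L.mkQ (fun i => (u i : ℤ)) from rfl]
  congr 1
  exact Finset.univ_sum_single (fun i => (u i : ℤ))

lemma latticeIdeal_le_ker {d : ℕ} (F : Type*) [Field F] (L : Submodule ℤ (Fin d → ℤ)) :
    latticeIdeal F L ≤ RingHom.ker (latPhi F L) := by
  rw [latticeIdeal, Ideal.span_le]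
  rintro p ⟨w, hw, rfl⟩
  simp only [SetLike.mem_coe, RingHom.mem_ker, map_sub, latPhi_monomial]
  rw [sub_eq_zero]
  congr 1
  rw [Submodule.Quotient.eq]
  convert hw using 1
  ext i
  simp only [Pi.sub_apply]
  omega

/-- For `u, v ∈ ℕ^d`, the binomial `x^u − x^v` lies in the lattice ideal `I_L` if and
only if `u − v ∈ L`. -/
theorem binomial_mem_latticeIdeal_iff {d : ℕ} {F : Type*} [Field F]
    (L : Submodule ℤ (Fin d → ℤ)) (u v : Fin d → ℕ) :
    (monomial (toExp u) (1 : F) - monomial (toExp v) (1 : F) ∈ latticeIdeal F L) ↔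
      (fun i => (u i : ℤ) - (v i : ℤ)) ∈ L := by
  constructor
  · intro h
    have h0 := latticeIdeal_le_ker F L h
    rw [RingHom.mem_ker, map_sub, latPhi_monomial, latPhi_monomial, sub_eq_zero] at h0
    have := AddMonoidAlgebra.single_inj.1 h0
    rcases this with ⟨hq, -⟩ | ⟨h1, -⟩
    · rw [Submodule.Quotient.eq] at hq
      exact hq
    · exact absurd h1 one_ne_zero
  · intro h
    set w : Fin d → ℤ := fun i => (u i : ℤ) - (v i : ℤ) with hw
    set m : Fin d → ℕ := fun i => min (u i) (v i) with hm
    have hu : u = m + fun i => (w i).toNat := by funext i; simp [hm, hw]; omega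
    have hv : v = m + fun i => (-w i).toNat := by funext i; simp [hm, hw]; omega
    have key : monomial (toExp u) (1 : F) - monomial (toExp v) (1 : F) =
        monomial (toExp m) (1 : F) *
          (monomial (toExp fun i => (w i).toNat) (1 : F) -
            monomial (toExp fun i => (-w i).toNat) (1 : F)) := by
      rw [mul_sub, monomial_mul, monomial_mul, one_mul, ← toExp_add, ← toExp_add, ← hu, ← hv]
    rw [key]
    exact Ideal.mul_mem_left _ _ (Ideal.subset_span ⟨w, h, rfl⟩)
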